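/- Every subspace L_{a,b} is contained in the affine Fermat cone {x ∈ ℂ^{n+2} : x_0^d + x_1^d + ⋯ + x_{n+1}^d = 0}, and the number of distinct linear subspaces of ℂ^{n+2} of the form L_{a,b}, as a ranges over {0,1,…,d−1}^{n/2+1} and b over all permutations of {0,1,…,n+1}, equals (n+1)·(n−1)·⋯·3·1·d^{n/2+1}. -/

import Mathlib

open Finset Matrix

/-- `ζ_{2d} = exp(2πi/(2d))`. -/
noncomputable def zeta2d (d : ℕ) : ℂ :=
  Complex.exp (2 * Real.pi * Complex.I / (2 * (d : ℂ)))

/-- The even-position index `2e` in `{0,…,n+1}` (with `n = 2h`). -/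
def evIdx (h : ℕ) (e : Fin (h + 1)) : Fin (2 * h + 2) :=
  ⟨2 * e.1, by have := e.isLt; omega⟩

/-- The odd-position index `2e+1` in `{0,…,n+1}` (with `n = 2h`). -/
def odIdx (h : ℕ) (e : Fin (h + 1)) : Fin (2 * h + 2) :=
  ⟨2 * e.1 + 1, by have := e.isLt; omega⟩

/-- The index set `I_N`: tuples `(i_0,…,i_{n+1})` with `0 ≤ i_e ≤ d-2` and `∑ i_e = N`,
for `n = 2h` even. -/
abbrev IdxSet (h d N : ℕ) : Type :=
  {i : Fin (2 * h + 2) → Fin (d - 1) // ∑ e, (i e).1 = N}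

/-- The period vector `p^{a,b}` of the linear cycle `ℙ^{n/2}_{a,b}` in the Fermat variety,
extended by zero to all integer tuples. -/
noncomputable def pvec (h d : ℕ) (a : Fin (h + 1) → ℕ) (b : Equiv.Perm (Fin (2 * h + 2)))
    (i : Fin (2 * h + 2) → ℕ) : ℂ :=
  if ∀ e : Fin (h + 1), i (b (evIdx h e)) + i (b (odIdx h e)) = d - 2 then
    zeta2d d ^ (∑ e : Fin (h + 1), (i (b (evIdx h e)) + 1) * (1 + 2 * a e))
  else 0

/-- The period matrix `[p_{i+j}]` with rows indexed by `I_{(n/2)d-n-2}` and columns by `I_d`. -/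
noncomputable def pmat (h d : ℕ) (p : (Fin (2 * h + 2) → ℕ) → ℂ) :
    Matrix (IdxSet h d (h * d - (2 * h + 2))) (IdxSet h d d) ℂ :=
  Matrix.of fun i j => p fun e => (i.1 e).1 + (j.1 e).1

/-- The period vector `P` of the linear cycle with `a = (0,…,0)` and `b = id`. -/
noncomputable def Pvec (h d : ℕ) : (Fin (2 * h + 2) → ℕ) → ℂ :=
  pvec h d (fun _ => 0) (Equiv.refl _)

/-- The period vector `P̌_m` (with `μ = m+1`): `a` has first `μ` entries `0`, the rest `1`,
and `b = id`. -/
noncomputable def PcheckVec (h d μ : ℕ) : (Fin (2 * h + 2) → ℕ) → ℂ :=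
  pvec h d (fun e => if e.1 < μ then 0 else 1) (Equiv.refl _)

/-- The combinatorial constant `C_{α_1,…,α_s}`. -/
def Ccoef (n d : ℕ) {s : ℕ} (α : Fin s → ℕ) : ℤ :=
  ((n + 1 + d).choose (n + 1) : ℤ) -
    ∑ k ∈ Finset.Icc 1 s, (-1 : ℤ) ^ (k - 1) *
      ∑ T ∈ Finset.univ.filter (fun T : Finset (Fin s) => T.card = k ∧ ∑ i ∈ T, α i ≤ d),
        (((n + 1 + d - ∑ i ∈ T, α i).choose (n + 1) : ℤ))

/-- The sequence `x^s, y^t` (x repeated s times followed by y repeated t times). -/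
def twoBlock (x y s t : ℕ) : Fin (s + t) → ℕ := fun i => if i.1 < s then x else y

/-- `K^d_n(m) = 2·C_{1^{n/2+1},(d-1)^{n/2+1}} − C_{1^{n−m+1},(d−1)^{m+1}}`, with `n = 2h`,
`μ = m+1`. -/
def Kdef (h d μ : ℕ) : ℤ :=
  2 * Ccoef (2 * h) d (twoBlock 1 (d - 1) (h + 1) (h + 1)) -
    Ccoef (2 * h) d (twoBlock 1 (d - 1) (2 * h + 2 - μ) μ)

/-- The linear subspace `L_{a,b} ⊆ ℂ^{n+2}` cut out by the equations
`x_{b_{2e}} − ζ_{2d}^{1+2a_{2e+1}}·x_{b_{2e+1}} = 0` for `e = 0,…,n/2`. -/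
noncomputable def Lsub (h d : ℕ) (a : Fin (h + 1) → ℕ) (b : Equiv.Perm (Fin (2 * h + 2))) :
    Submodule ℂ (Fin (2 * h + 2) → ℂ) :=
  ⨅ e : Fin (h + 1), LinearMap.ker
    ((LinearMap.proj (R := ℂ) (φ := fun _ : Fin (2 * h + 2) => ℂ) (b (evIdx h e)))
      - zeta2d d ^ (1 + 2 * a e) •
        (LinearMap.proj (R := ℂ) (φ := fun _ : Fin (2 * h + 2) => ℂ) (b (odIdx h e))))

lemma zeta2d_ne_zero (d : ℕ) : zeta2d d ≠ 0 := Complex.exp_ne_zero _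

lemma zeta2d_pow (d m : ℕ) : zeta2d d ^ m = Complex.exp (m * (2 * Real.pi * Complex.I / (2 * (d : ℂ)))) := by
  rw [zeta2d, ← Complex.exp_nat_mul]

lemma zeta2d_pow_eq_one_iff {d : ℕ} (hd : 0 < d) (m : ℕ) :
    zeta2d d ^ m = 1 ↔ 2 * d ∣ m := by
  rw [zeta2d_pow, Complex.exp_eq_one_iff]
  have hd' : (d : ℂ) ≠ 0 := Nat.cast_ne_zero.2 hd.ne'
  have hpi : (Real.pi : ℂ) ≠ 0 := by exact_mod_cast Real.pi_ne_zero
  have hI := Complex.I_ne_zero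
  constructor
  · rintro ⟨n, hn⟩
    field_simp at hn
    have h2 : (m : ℂ) * (2 * Real.pi * Complex.I) = (n * (2 * d)) * (2 * Real.pi * Complex.I) := by
      linear_combination (2 * Real.pi * Complex.I) * hn
    have h3 : (m : ℂ) = n * (2 * d) := by
      exact mul_right_cancel₀ (by simp [hpi, hI] : (2 * (Real.pi:ℂ) * Complex.I) ≠ 0) h2
    have h4 : ((2 * d : ℕ) : ℤ) ∣ (m : ℤ) := by
      refine ⟨n, ?_⟩
      have : ((m : ℤ) : ℂ) = ((((2*d : ℕ) : ℤ) * n : ℤ) : ℂ) := by push_cast; linear_combination h3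
      exact_mod_cast this
    exact_mod_cast h4
  · rintro ⟨k, rfl⟩
    refine ⟨k, ?_⟩
    push_cast
    field_simp

lemma zeta2d_pow_inj {d : ℕ} (hd : 0 < d) {m k : ℕ} (hm : m < 2 * d) (hk : k < 2 * d)
    (hmk : zeta2d d ^ m = zeta2d d ^ k) : m = k := by
  rcases le_total m k with hle | hle
  · have h1 : zeta2d d ^ m * zeta2d d ^ (k - m) = zeta2d d ^ m * 1 := by
      rw [← pow_add, mul_one, Nat.add_sub_cancel' hle]
      exact hmk.symm
    have h2 := mul_left_cancel₀ (pow_ne_zero m (zeta2d_ne_zero d)) h1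
    have h3 := (zeta2d_pow_eq_one_iff hd _).1 h2
    rcases Nat.eq_zero_or_pos (k - m) with h0 | h0
    · omega
    · have := Nat.le_of_dvd h0 h3; omega
  · have h1 : zeta2d d ^ k * zeta2d d ^ (m - k) = zeta2d d ^ k * 1 := by
      rw [← pow_add, mul_one, Nat.add_sub_cancel' hle]
      exact hmk
    have h2 := mul_left_cancel₀ (pow_ne_zero k (zeta2d_ne_zero d)) h1
    have h3 := (zeta2d_pow_eq_one_iff hd _).1 h2
    rcases Nat.eq_zero_or_pos (m - k) with h0 | h0
    · omega
    · have := Nat.le_of_dvd h0 h3; omega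

lemma zeta2d_pow_d {d : ℕ} (hd : 0 < d) : zeta2d d ^ d = -1 := by
  rw [zeta2d_pow]
  have hd' : (d : ℂ) ≠ 0 := Nat.cast_ne_zero.2 hd.ne'
  have : (d : ℂ) * (2 * Real.pi * Complex.I / (2 * d)) = Real.pi * Complex.I := by
    field_simp
  rw [this, Complex.exp_pi_mul_I]

/-- index `2e+k` -/
def pr (h : ℕ) (e : Fin (h + 1)) (k : Bool) : Fin (2 * h + 2) :=
  if k then odIdx h e else evIdx h e

lemma pr_val (h : ℕ) (e : Fin (h + 1)) (k : Bool) : (pr h e k).1 = 2 * e.1 + k.toNat := by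
  cases k <;> rfl

lemma pr_inj {h : ℕ} {e e' : Fin (h + 1)} {k k' : Bool} (hpp : pr h e k = pr h e' k') :
    e = e' ∧ k = k' := by
  have := congrArg Fin.val hpp
  rw [pr_val, pr_val] at this
  cases k <;> cases k' <;> simp [Bool.toNat] at this ⊢ <;> [skip; omega; omega; skip] <;>
    exact Fin.ext (by omega)

def halfI {h : ℕ} (i : Fin (2 * h + 2)) : Fin (h + 1) := ⟨i.1 / 2, by have := i.isLt; omega⟩
def parI {h : ℕ} (i : Fin (2 * h + 2)) : Bool := decide (i.1 % 2 = 1)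

lemma halfI_pr {h : ℕ} (e : Fin (h + 1)) (k : Bool) : halfI (pr h e k) = e := by
  apply Fin.ext
  simp only [halfI, pr_val]
  cases k <;> simp [Bool.toNat] <;> omega

lemma parI_pr {h : ℕ} (e : Fin (h + 1)) (k : Bool) : parI (pr h e k) = k := by
  simp only [parI, pr_val]
  cases k <;> simp [Bool.toNat] <;> omega

lemma pr_halfI_parI {h : ℕ} (i : Fin (2 * h + 2)) : pr h (halfI i) (parI i) = i := by
  apply Fin.ext
  rw [pr_val]
  simp only [halfI]
  by_cases hp : i.1 % 2 = 1 <;> simp [parI, hp, Bool.toNat] <;> omega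

lemma evIdx_eq_pr (h : ℕ) (e : Fin (h + 1)) : evIdx h e = pr h e false := rfl
lemma odIdx_eq_pr (h : ℕ) (e : Fin (h + 1)) : odIdx h e = pr h e true := rfl

lemma mem_Lsub {h d : ℕ} {a : Fin (h + 1) → ℕ} {b : Equiv.Perm (Fin (2 * h + 2))}
    {x : Fin (2 * h + 2) → ℂ} :
    x ∈ Lsub h d a b ↔
      ∀ e : Fin (h + 1), x (b (evIdx h e)) = zeta2d d ^ (1 + 2 * a e) * x (b (odIdx h e)) := by
  simp [Lsub, Submodule.mem_iInf, LinearMap.mem_ker, LinearMap.sub_apply, LinearMap.smul_apply,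
    LinearMap.proj_apply, sub_eq_zero, smul_eq_mul]

/-- pairing equivalence -/
def prEquiv (h : ℕ) : Fin (h + 1) × Bool ≃ Fin (2 * h + 2) where
  toFun p := pr h p.1 p.2
  invFun i := (halfI i, parI i)
  left_inv p := by simp [halfI_pr, parI_pr]
  right_inv i := pr_halfI_parI i

lemma sum_split {h : ℕ} (g : Fin (2 * h + 2) → ℂ) :
    ∑ i, g i = ∑ e : Fin (h + 1), (g (evIdx h e) + g (odIdx h e)) := by
  rw [← Equiv.sum_comp (prEquiv h) g, Fintype.sum_prod_type]
  refine Finset.sum_congr rfl fun e _ => ?_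
  rw [Fintype.sum_bool]
  simp [prEquiv, evIdx_eq_pr, odIdx_eq_pr, add_comm]

lemma fermat_part (h d : ℕ) (hd : 0 < d) (a : Fin (h + 1) → ℕ) (b : Equiv.Perm (Fin (2 * h + 2)))
    (x : Fin (2 * h + 2) → ℂ) (hx : x ∈ Lsub h d a b) : ∑ e, x e ^ d = 0 := by
  rw [mem_Lsub] at hx
  have : ∑ i, x i ^ d = ∑ i, x (b i) ^ d := (Equiv.sum_comp b (fun i => x i ^ d)).symm
  rw [this, sum_split (fun i => x (b i) ^ d)]
  refine Finset.sum_eq_zero fun e _ => ?_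
  rw [hx e, mul_pow, ← pow_mul, mul_comm (1 + 2 * a e) d, pow_mul, zeta2d_pow_d hd]
  have hodd : Odd (1 + 2 * a e) := ⟨a e, by ring⟩
  rw [hodd.neg_one_pow]
  ring

/-- the pair-permuting/flipping permutation -/
def tau (h : ℕ) (π : Equiv.Perm (Fin (h + 1))) (ε : Fin (h + 1) → Bool) :
    Equiv.Perm (Fin (2 * h + 2)) where
  toFun i := pr h (π (halfI i)) (xor (parI i) (ε (halfI i)))
  invFun i := pr h (π⁻¹ (halfI i)) (xor (parI i) (ε (π⁻¹ (halfI i))))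
  left_inv i := by
    simp only [halfI_pr, parI_pr, Equiv.Perm.inv_def, Equiv.symm_apply_apply]
    rw [Bool.xor_assoc, Bool.xor_self, Bool.xor_false, pr_halfI_parI]
  right_inv i := by
    simp only [halfI_pr, parI_pr, Equiv.Perm.inv_def, Equiv.apply_symm_apply]
    rw [Bool.xor_assoc, Bool.xor_self, Bool.xor_false, pr_halfI_parI]

lemma tau_pr (h : ℕ) (π : Equiv.Perm (Fin (h + 1))) (ε : Fin (h + 1) → Bool)
    (e : Fin (h + 1)) (k : Bool) :
    tau h π ε (pr h e k) = pr h (π e) (xor k (ε e)) := by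
  simp [tau, halfI_pr, parI_pr, Equiv.coe_fn_mk]

def flipFin {d : ℕ} (x : Fin d) : Fin d := ⟨d - 1 - x.1, by have := x.isLt; omega⟩

/-- the action of `Perm (Fin (h+1)) × (Fin (h+1) → Bool)` on parameters -/
def act (h d : ℕ) (g : Equiv.Perm (Fin (h + 1)) × (Fin (h + 1) → Bool))
    (t : (Fin (h + 1) → Fin d) × Equiv.Perm (Fin (2 * h + 2))) :
    (Fin (h + 1) → Fin d) × Equiv.Perm (Fin (2 * h + 2)) :=
  (fun e => if g.2 e then flipFin (t.1 (g.1 e)) else t.1 (g.1 e), (tau h g.1 g.2).trans t.2)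

lemma flip_rel {d : ℕ} (hd : 0 < d) (c : Fin d) (u v : ℂ) :
    v = zeta2d d ^ (1 + 2 * (flipFin c).1) * u ↔ u = zeta2d d ^ (1 + 2 * c.1) * v := by
  have hc := c.isLt
  have key : zeta2d d ^ (1 + 2 * (flipFin c).1) * zeta2d d ^ (1 + 2 * c.1) = 1 := by
    rw [← pow_add]
    have : 1 + 2 * (flipFin c).1 + (1 + 2 * c.1) = 2 * d := by
      simp only [flipFin]; omega
    rw [this, zeta2d_pow_eq_one_iff hd]
  constructor
  · intro hv
    rw [hv, ← mul_assoc, mul_comm (zeta2d d ^ (1 + 2 * c.1)), key, one_mul]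
  · intro hu
    rw [hu, ← mul_assoc, key, one_mul]

lemma act_Lsub {h d : ℕ} (hd : 0 < d) (g : Equiv.Perm (Fin (h + 1)) × (Fin (h + 1) → Bool))
    (t : (Fin (h + 1) → Fin d) × Equiv.Perm (Fin (2 * h + 2))) :
    Lsub h d (fun e => ((act h d g t).1 e : ℕ)) (act h d g t).2
      = Lsub h d (fun e => (t.1 e : ℕ)) t.2 := by
  obtain ⟨π, ε⟩ := g
  obtain ⟨a, b⟩ := t
  ext x
  rw [mem_Lsub, mem_Lsub]
  have key : ∀ e : Fin (h + 1),
      (x (((tau h π ε).trans b) (evIdx h e)) =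
        zeta2d d ^ (1 + 2 * ((act h d (π, ε) (a, b)).1 e : ℕ)) *
          x (((tau h π ε).trans b) (odIdx h e)))
      ↔ (x (b (evIdx h (π e))) = zeta2d d ^ (1 + 2 * (a (π e) : ℕ)) * x (b (odIdx h (π e)))) := by
    intro e
    have hev : ((tau h π ε).trans b) (evIdx h e) = b (pr h (π e) (ε e)) := by
      simp [Equiv.trans_apply, evIdx_eq_pr, tau_pr]
    have hod : ((tau h π ε).trans b) (odIdx h e) = b (pr h (π e) (!ε e)) := by
      simp [Equiv.trans_apply, odIdx_eq_pr, tau_pr]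
    rw [hev, hod]
    cases hε : ε e
    · simp [act, hε, evIdx_eq_pr, odIdx_eq_pr]
    · simp only [act, hε, evIdx_eq_pr, odIdx_eq_pr, Bool.not_true, if_true]
      exact flip_rel hd (a (π e)) _ _
  constructor
  · intro H e
    have := (key (π⁻¹ e)).1 (H (π⁻¹ e))
    rwa [Equiv.Perm.inv_def, Equiv.apply_symm_apply] at this
  · intro H e
    exact (key e).2 (H (π e))

lemma ev_ne_od {h : ℕ} (e e' : Fin (h + 1)) : evIdx h e ≠ odIdx h e' := by
  intro hcon
  have := congrArg Fin.val hcon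
  simp only [evIdx, odIdx] at this
  omega

lemma struct {h d : ℕ} (hd : 0 < d) {a a' : Fin (h + 1) → Fin d}
    {b b' : Equiv.Perm (Fin (2 * h + 2))}
    (hL : Lsub h d (fun e => (a' e : ℕ)) b' = Lsub h d (fun e => (a e : ℕ)) b)
    (e' : Fin (h + 1)) :
    ∃ e, (b' (evIdx h e') = b (evIdx h e) ∧ b' (odIdx h e') = b (odIdx h e) ∧ a' e' = a e)
      ∨ (b' (evIdx h e') = b (odIdx h e) ∧ b' (odIdx h e') = b (evIdx h e) ∧
          (a' e').1 + (a e).1 + 1 = d) := by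
  set i := b' (evIdx h e') with hi
  set j := b' (odIdx h e') with hj
  have hij : i ≠ j := fun hcon => ev_ne_od e' e' (b'.injective hcon)
  set c' : ℕ := 1 + 2 * (a' e').1 with hc'
  set v : Fin (2 * h + 2) → ℂ := fun t => if t = i then zeta2d d ^ c' else if t = j then 1 else 0
    with hv
  have hvi : v i = zeta2d d ^ c' := by simp [hv]
  have hvj : v j = 1 := by simp [hv, hij.symm]
  have hvz : ∀ t, t ≠ i → t ≠ j → v t = 0 := by
    intro t h1 h2; simp [hv, h1, h2]
  have hsupp : ∀ t, v t ≠ 0 → t = i ∨ t = j := by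
    intro t ht
    by_cases h1 : t = i
    · exact Or.inl h1
    by_cases h2 : t = j
    · exact Or.inr h2
    exact absurd (hvz t h1 h2) ht
  have hvmem : v ∈ Lsub h d (fun e => (a' e : ℕ)) b' := by
    rw [mem_Lsub]
    intro e
    by_cases he : e = e'
    · subst he
      rw [← hi, ← hj, hvi, hvj, mul_one]
    · have h1 : b' (evIdx h e) ≠ i := by
        rw [hi]; intro hcon
        exact he (pr_inj (k := false) (k' := false) (b'.injective hcon)).1
      have h2 : b' (evIdx h e) ≠ j := by
        rw [hj]; intro hcon; exact ev_ne_od e e' (b'.injective hcon)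
      have h3 : b' (odIdx h e) ≠ i := by
        rw [hi]; intro hcon; exact ev_ne_od e' e (b'.injective hcon).symm
      have h4 : b' (odIdx h e) ≠ j := by
        rw [hj]; intro hcon
        exact he (pr_inj (k := true) (k' := true) (b'.injective hcon)).1
      rw [hvz _ h1 h2, hvz _ h3 h4, mul_zero]
  rw [hL, mem_Lsub] at hvmem
  -- locate j in the matching of b
  obtain ⟨e, k, hjk⟩ : ∃ e k, j = b (pr h e k) :=
    ⟨halfI (b.symm j), parI (b.symm j), by rw [pr_halfI_parI, Equiv.apply_symm_apply]⟩
  have He := hvmem e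
  have hae := (a e).isLt
  have hae' := (a' e').isLt
  cases k
  · -- j = b (evIdx h e)
    rw [← evIdx_eq_pr] at hjk
    rw [← hjk, hvj] at He
    have hne : v (b (odIdx h e)) ≠ 0 := by
      intro hcon
      rw [hcon, mul_zero] at He
      exact one_ne_zero He
    have : b (odIdx h e) = i ∨ b (odIdx h e) = j := hsupp _ hne
    rcases this with hbi | hbj
    · rw [hbi, hvi, ← pow_add] at He
      obtain ⟨q, hq⟩ := (zeta2d_pow_eq_one_iff hd _).1 He.symm
      have hub : 1 + 2 * (a e).1 + c' < 2 * d * 2 := by omega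
      have hqlt : q < 2 := Nat.lt_of_mul_lt_mul_left (hq ▸ hub)
      have hq0 : q ≠ 0 := by rintro rfl; rw [Nat.mul_zero] at hq; omega
      have hq1 : q = 1 := by omega
      subst hq1
      refine ⟨e, Or.inr ⟨hbi.symm, hjk, by omega⟩⟩
    · exact absurd (b.injective (hjk ▸ hbj)) (fun hcon => ev_ne_od e e hcon.symm)
  · -- j = b (odIdx h e)
    rw [← odIdx_eq_pr] at hjk
    rw [← hjk, hvj, mul_one] at He
    have hne : v (b (evIdx h e)) ≠ 0 := by
      rw [He]; exact pow_ne_zero _ (zeta2d_ne_zero d)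
    rcases hsupp _ hne with hbi | hbj
    · rw [hbi, hvi] at He
      have := zeta2d_pow_inj hd (by omega) (by omega) He
      refine ⟨e, Or.inl ⟨hbi.symm, hjk, ?_⟩⟩
      exact Fin.ext (by omega)
    · exact absurd (b.injective (hjk ▸ hbj)) (ev_ne_od e e)

lemma act_inj {h d : ℕ} {g g' : Equiv.Perm (Fin (h + 1)) × (Fin (h + 1) → Bool)}
    {t : (Fin (h + 1) → Fin d) × Equiv.Perm (Fin (2 * h + 2))}
    (hgt : act h d g t = act h d g' t) : g = g' := by
  obtain ⟨π, ε⟩ := g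
  obtain ⟨π', ε'⟩ := g'
  obtain ⟨a, b⟩ := t
  have h2 : (tau h π ε).trans b = (tau h π' ε').trans b := congrArg Prod.snd hgt
  have h3 : ∀ i, tau h π ε i = tau h π' ε' i := by
    intro i
    have h2' : ((tau h π ε).trans b) i = ((tau h π' ε').trans b) i := by rw [h2]
    rw [Equiv.trans_apply, Equiv.trans_apply] at h2'
    exact b.injective h2'
  have h4 : ∀ e : Fin (h + 1), π e = π' e ∧ ε e = ε' e := by
    intro e
    have := h3 (pr h e false)
    rw [tau_pr, tau_pr] at this
    have := pr_inj this
    simpa using this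
  have hπ : π = π' := Equiv.ext fun e => (h4 e).1
  have hε : ε = ε' := funext fun e => (h4 e).2
  rw [hπ, hε]

lemma fiber_mem {h d : ℕ} (hd : 0 < d) {a a₀ : Fin (h + 1) → Fin d}
    {b b₀ : Equiv.Perm (Fin (2 * h + 2))}
    (hL : Lsub h d (fun e => (a e : ℕ)) b = Lsub h d (fun e => (a₀ e : ℕ)) b₀) :
    ∃ g, act h d g (a₀, b₀) = (a, b) := by
  choose f hf using fun e' => struct hd hL e'
  set ε : Fin (h + 1) → Bool := fun e' => !(decide (b (evIdx h e') = b₀ (evIdx h (f e')))) with hε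
  have hEv : ∀ e', b (evIdx h e') = b₀ (pr h (f e') (ε e')) := by
    intro e'
    rcases hf e' with ⟨h1, _, _⟩ | ⟨h1, _, _⟩
    · have : ε e' = false := by simp [hε, h1]
      rw [this, ← evIdx_eq_pr]; exact h1
    · have : ε e' = true := by
        simp only [hε, Bool.not_eq_true', decide_eq_false_iff_not]
        rw [h1]
        intro hcon
        exact ev_ne_od (f e') (f e') (b₀.injective hcon).symm
      rw [this, ← odIdx_eq_pr]; exact h1
  have hOd : ∀ e', b (odIdx h e') = b₀ (pr h (f e') (!ε e')) := by
    intro e'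
    rcases hf e' with ⟨h1, h2, _⟩ | ⟨h1, h2, _⟩
    · have : ε e' = false := by simp [hε, h1]
      rw [this, Bool.not_false, ← odIdx_eq_pr]; exact h2
    · have : ε e' = true := by
        simp only [hε, Bool.not_eq_true', decide_eq_false_iff_not]
        rw [h1]
        intro hcon
        exact ev_ne_od (f e') (f e') (b₀.injective hcon).symm
      rw [this, Bool.not_true, ← evIdx_eq_pr]; exact h2
  have finj : Function.Injective f := by
    intro e₁ e₂ hfe
    by_contra hne
    by_cases hee : ε e₁ = ε e₂
    · have : b (evIdx h e₁) = b (evIdx h e₂) := by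
        rw [hEv e₁, hEv e₂, hfe, hee]
      have := pr_inj (k := false) (k' := false) (b.injective this)
      exact hne this.1
    · have hee' : ε e₂ = !ε e₁ := by
        cases hb : ε e₁ <;> cases hb' : ε e₂
        · exact absurd (hb.trans hb'.symm) hee
        · rfl
        · rfl
        · exact absurd (hb.trans hb'.symm) hee
      have : b (evIdx h e₁) = b (odIdx h e₂) := by
        rw [hEv e₁, hOd e₂, hfe, hee', Bool.not_not]
      exact ev_ne_od e₁ e₂ (b.injective this)
  have fbij : Function.Bijective f := (Fintype.bijective_iff_injective_and_card f).2 ⟨finj, rfl⟩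
  set π := Equiv.ofBijective f fbij with hπ
  have hπe : ∀ e, π e = f e := fun e => rfl
  refine ⟨(π, ε), ?_⟩
  have hb : (tau h π ε).trans b₀ = b := by
    apply Equiv.ext
    intro i
    have hi : i = pr h (halfI i) (parI i) := (pr_halfI_parI i).symm
    rw [hi]
    cases hk : parI i
    · rw [Equiv.trans_apply, tau_pr, hπe, Bool.false_xor, ← hEv, evIdx_eq_pr]
    · rw [Equiv.trans_apply, tau_pr, hπe, Bool.true_xor, ← hOd, odIdx_eq_pr]
  have hA : ∀ e, if ε e = true then (a e).1 + (a₀ (f e)).1 + 1 = d else a e = a₀ (f e) := by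
    intro e
    rcases hf e with ⟨h1, _, h3⟩ | ⟨h1, _, h3⟩
    · have hεe : ε e = false := by simp [hε, h1]
      rw [hεe]; simpa using h3
    · have hεe : ε e = true := by
        simp only [hε, Bool.not_eq_true', decide_eq_false_iff_not]
        rw [h1]
        intro hcon
        exact ev_ne_od (f e) (f e) (b₀.injective hcon).symm
      rw [hεe]; simpa using h3
  have ha : (fun e => if ε e then flipFin (a₀ (π e)) else a₀ (π e)) = a := by
    funext e
    have hAe := hA e
    cases hεe : ε e
    · rw [hεe] at hAe
      simp only [Bool.false_eq_true, if_false] at hAe ⊢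
      rw [hπe]
      exact hAe.symm
    · rw [hεe] at hAe
      simp only [if_true] at hAe ⊢
      rw [hπe]
      apply Fin.ext
      simp only [flipFin]
      omega
  show ((fun e => if ε e then flipFin (a₀ (π e)) else a₀ (π e)), (tau h π ε).trans b₀) = (a, b)
  rw [Prod.mk.injEq]
  exact ⟨ha, hb⟩

lemma fact_id (h : ℕ) :
    (∏ e : Fin (h + 1), (2 * (e : ℕ) + 1)) * (Nat.factorial (h + 1) * 2 ^ (h + 1))
      = Nat.factorial (2 * h + 2) := by
  induction h with
  | zero => simp [Nat.factorial]
  | succ n ih =>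
    rw [Fin.prod_univ_castSucc]
    simp only [Fin.coe_castSucc, Fin.val_last]
    have h1 : 2 * (n + 1) + 2 = (2 * n + 2) + 1 + 1 := by ring
    have h2 : Nat.factorial ((2 * n + 2) + 1 + 1)
        = ((2 * n + 2) + 1 + 1) * (((2 * n + 2) + 1) * Nat.factorial (2 * n + 2)) := by
      rw [Nat.factorial_succ, Nat.factorial_succ]
    rw [h1, h2, ← ih, Nat.factorial_succ]
    ring


/-- Every `L_{a,b}` lies in the affine Fermat cone `{x : ∑ x_e^d = 0}`, and the number of
distinct subspaces of the form `L_{a,b}` equals `(n+1)·(n−1)·⋯·3·1 · d^{n/2+1}`. -/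
theorem linear_cycles_in_fermat_cone_and_count (h d : ℕ) (hh : 1 ≤ h) (hd : 3 ≤ d) :
    (∀ (a : Fin (h + 1) → Fin d) (b : Equiv.Perm (Fin (2 * h + 2))),
      ∀ x ∈ Lsub h d (fun e => (a e : ℕ)) b, ∑ e, x e ^ d = 0) ∧
    Set.ncard {W : Submodule ℂ (Fin (2 * h + 2) → ℂ) |
        ∃ (a : Fin (h + 1) → Fin d) (b : Equiv.Perm (Fin (2 * h + 2))),
          W = Lsub h d (fun e => (a e : ℕ)) b}
      = (∏ e : Fin (h + 1), (2 * (e : ℕ) + 1)) * d ^ (h + 1) := by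
  classical
  have hd0 : 0 < d := by omega
  constructor
  · intro a b x hx
    exact fermat_part h d hd0 _ b x hx
  set F : ((Fin (h + 1) → Fin d) × Equiv.Perm (Fin (2 * h + 2)))
      → Submodule ℂ (Fin (2 * h + 2) → ℂ) :=
    fun t => Lsub h d (fun e => (t.1 e : ℕ)) t.2 with hF
  have hset : {W : Submodule ℂ (Fin (2 * h + 2) → ℂ) |
        ∃ (a : Fin (h + 1) → Fin d) (b : Equiv.Perm (Fin (2 * h + 2))),
          W = Lsub h d (fun e => (a e : ℕ)) b} = Set.range F := by
    ext W
    constructor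
    · rintro ⟨a, b, rfl⟩
      exact ⟨(a, b), rfl⟩
    · rintro ⟨⟨a, b⟩, rfl⟩
      exact ⟨a, b, rfl⟩
  rw [hset]
  have himg : Set.range F = ↑(Finset.image F Finset.univ) := by
    rw [Finset.coe_image, Finset.coe_univ, Set.image_univ]
  rw [himg, Set.ncard_coe_finset]
  -- fiberwise count
  set K : ℕ := Nat.factorial (h + 1) * 2 ^ (h + 1) with hK
  have hfiber : ∀ w ∈ Finset.image F Finset.univ,
      (Finset.univ.filter fun t => F t = w).card = K := by
    intro w hw
    obtain ⟨t₀, _, ht₀⟩ := Finset.mem_image.1 hw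
    have hcardG : (Finset.univ : Finset (Equiv.Perm (Fin (h + 1)) × (Fin (h + 1) → Bool))).card
        = K := by
      rw [Finset.card_univ, Fintype.card_prod, Fintype.card_perm, Fintype.card_fin,
        Fintype.card_fun, Fintype.card_bool, Fintype.card_fin]
    rw [← hcardG]
    refine (Finset.card_bij (fun g _ => act h d g t₀) ?_ ?_ ?_).symm
    · intro g _
      rw [Finset.mem_filter]
      refine ⟨Finset.mem_univ _, ?_⟩
      rw [hF]
      show Lsub h d (fun e => ((act h d g t₀).1 e : ℕ)) (act h d g t₀).2 = w
      rw [act_Lsub hd0 g t₀, ← ht₀]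
    · intro g _ g' _ hgg
      exact act_inj hgg
    · intro t ht
      rw [Finset.mem_filter] at ht
      have hLt : F t = F t₀ := by rw [ht.2, ht₀]
      obtain ⟨a, b⟩ := t
      obtain ⟨a₀, b₀⟩ := t₀
      have := fiber_mem hd0 (a := a) (a₀ := a₀) (b := b) (b₀ := b₀) hLt
      obtain ⟨g, hg⟩ := this
      exact ⟨g, Finset.mem_univ _, hg⟩
  have htot : (Finset.univ : Finset ((Fin (h + 1) → Fin d)
      × Equiv.Perm (Fin (2 * h + 2)))).card = (Finset.image F Finset.univ).card * K := by
    rw [Finset.card_eq_sum_card_fiberwise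
      (fun t _ => Finset.mem_image_of_mem F (Finset.mem_univ t))]
    rw [Finset.sum_congr rfl hfiber, Finset.sum_const, smul_eq_mul]
  have hTcard : (Finset.univ : Finset ((Fin (h + 1) → Fin d)
      × Equiv.Perm (Fin (2 * h + 2)))).card = d ^ (h + 1) * Nat.factorial (2 * h + 2) := by
    rw [Finset.card_univ, Fintype.card_prod, Fintype.card_fun, Fintype.card_fin,
      Fintype.card_fin, Fintype.card_perm, Fintype.card_fin]
  have hKpos : 0 < K := by
    rw [hK]
    exact Nat.mul_pos (Nat.factorial_pos _) (Nat.pow_pos (by norm_num))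
  apply Nat.eq_of_mul_eq_mul_right hKpos
  rw [← htot, hTcard, ← fact_id h, ← hK]
  ring
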